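/- Let f = l_1⋯l_m ∈ K[x,y] be a product of m ≥ 3 pairwise nonproportional linear forms in two variables, char(K) ∤ m. Let 𝕀 = (f/l_1, …, f/l_m). Then μ(J_f·𝕀) = 2m − 1, where μ denotes minimal number of generators; here J_f = (f_x, f_y) is generated by a regular sequence of two forms of degree m−1. -/

import Mathlib

open MvPolynomial Finset

namespace Stmt18Aux

variable {K : Type*} [Field K]

lemma deg2 (ν : Fin 2 →₀ ℕ) : ν.degree = ν 0 + ν 1 := by
  rw [Finsupp.degree_apply]
  rw [Finset.sum_subset (Finset.subset_univ _)
    (fun x _ hx => Finsupp.notMem_support_iff.mp hx), Fin.sum_univ_two]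

lemma homog1 {p : MvPolynomial (Fin 2) K} (hp : p.IsHomogeneous 1) :
    p = C (coeff (Finsupp.single 0 1) p) * X 0 + C (coeff (Finsupp.single 1 1) p) * X 1 := by
  classical
  have hne : (Finsupp.single (0 : Fin 2) 1 : Fin 2 →₀ ℕ) ≠ Finsupp.single 1 1 := by
    intro h
    have := DFunLike.congr_fun h 0
    simp [Finsupp.single_apply] at this
  ext ν
  rw [coeff_add, coeff_C_mul, coeff_C_mul, coeff_X', coeff_X']
  by_cases h0 : Finsupp.single (0 : Fin 2) 1 = ν
  · have h1 : ¬ (Finsupp.single (1 : Fin 2) 1 = ν) := fun h => hne (h0.trans h.symm)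
    rw [if_pos h0, if_neg h1, ← h0]
    ring
  · by_cases h1 : Finsupp.single (1 : Fin 2) 1 = ν
    · rw [if_pos h1, if_neg h0, ← h1]
      ring
    · rw [if_neg h0, if_neg h1, mul_zero, mul_zero, add_zero]
      apply hp.coeff_eq_zero
      intro hd
      rw [deg2] at hd
      have hcase : (ν 0 = 1 ∧ ν 1 = 0) ∨ (ν 0 = 0 ∧ ν 1 = 1) := by omega
      rcases hcase with ⟨ha, hb⟩ | ⟨ha, hb⟩
      · apply h0
        ext j
        fin_cases j <;> simp [Finsupp.single_apply, ha, hb]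
      · apply h1
        ext j
        fin_cases j <;> simp [Finsupp.single_apply, ha, hb]

lemma coeff_mul_lt_of_low {N : ℕ} {s : MvPolynomial (Fin 2) K}
    (hs : ∀ ν : Fin 2 →₀ ℕ, ν.degree < N → coeff ν s = 0) (r : MvPolynomial (Fin 2) K)
    {d : Fin 2 →₀ ℕ} (hd : d.degree < N) : coeff d (r * s) = 0 := by
  rw [coeff_mul]
  apply Finset.sum_eq_zero
  rintro ⟨d1, d2⟩ hx
  rw [Finset.HasAntidiagonal.mem_antidiagonal] at hx
  have hdeg : d1.degree + d2.degree = d.degree := by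
    rw [← hx]; simp only [deg2, Finsupp.add_apply]; ring
  have : d2.degree < N := by omega
  simp [hs _ this]

lemma coeff_mul_eq_of_low {N : ℕ} {s : MvPolynomial (Fin 2) K}
    (hs : ∀ ν : Fin 2 →₀ ℕ, ν.degree < N → coeff ν s = 0) (r : MvPolynomial (Fin 2) K)
    {d : Fin 2 →₀ ℕ} (hd : d.degree = N) :
    coeff d (r * s) = constantCoeff r * coeff d s := by
  classical
  rw [coeff_mul, Finset.sum_eq_single ((0 : Fin 2 →₀ ℕ), d)]
  · simp [constantCoeff_eq]
  · rintro ⟨d1, d2⟩ hx hne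
    rw [Finset.HasAntidiagonal.mem_antidiagonal] at hx
    have hdeg : d1.degree + d2.degree = d.degree := by
      rw [← hx]; simp only [deg2, Finsupp.add_apply]; ring
    by_cases hd1 : d1 = 0
    · subst hd1
      have hx' : d2 = d := by simpa using hx
      exact absurd (by rw [hx']) hne
    · have h1 : d1.degree ≠ 0 := fun h => hd1 ((Finsupp.degree_eq_zero_iff _).mp h)
      have : d2.degree < N := by omega
      simp [hs _ this]
  · intro h
    exact absurd (Finset.HasAntidiagonal.mem_antidiagonal.mpr (zero_add d)) h

lemma homog_factor {n : ℕ} {p u h : MvPolynomial (Fin 2) K} (hp : p.IsHomogeneous n)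
    (hu : u.IsHomogeneous n) (heq : u = h * p) : u = C (constantCoeff h) * p := by
  have hlow : ∀ ν : Fin 2 →₀ ℕ, ν.degree < n → coeff ν p = 0 :=
    fun ν hν => hp.coeff_eq_zero (by omega)
  ext ν
  by_cases hν : ν.degree = n
  · rw [heq, coeff_mul_eq_of_low hlow h hν, coeff_C_mul]
  · rw [hu.coeff_eq_zero hν, coeff_C_mul, hp.coeff_eq_zero hν, mul_zero]

lemma prime_X0 : Prime (X 0 : MvPolynomial (Fin 2) K) := by
  have h := MulEquiv.prime_iff (MvPolynomial.finSuccEquiv K 1).toMulEquiv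
    (p := (X 0 : MvPolynomial (Fin 2) K))
  rw [← h]
  show Prime (MvPolynomial.finSuccEquiv K 1 (X 0))
  rw [finSuccEquiv_X_zero]
  exact Polynomial.prime_X

lemma prime_linear {a b : K} (hab : ¬(a = 0 ∧ b = 0)) :
    Prime (C a * X 0 + C b * X 1 : MvPolynomial (Fin 2) K) := by
  by_cases ha : a = 0
  · have hb : b ≠ 0 := fun h => hab ⟨ha, h⟩
    subst ha
    let F : MvPolynomial (Fin 2) K →ₐ[K] MvPolynomial (Fin 2) K := aeval ![C b * X 1, X 0]
    let G : MvPolynomial (Fin 2) K →ₐ[K] MvPolynomial (Fin 2) K := aeval ![X 1, C b⁻¹ * X 0]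
    have e1 : (C b : MvPolynomial (Fin 2) K) * C b⁻¹ = 1 := by
      rw [← C_mul, mul_inv_cancel₀ hb, C_1]
    have hFG : F.comp G = AlgHom.id K _ := by
      apply MvPolynomial.algHom_ext
      intro i
      rw [AlgHom.comp_apply, AlgHom.id_apply]
      fin_cases i
      · simp [F, G]
      · simp only [F, G, Fin.isValue, aeval_X, Matrix.cons_val_one, Matrix.cons_val_zero,
          Matrix.head_cons, map_mul, aeval_C, algebraMap_eq, Fin.mk_zero, Fin.mk_one]
        linear_combination (X (1 : Fin 2) : MvPolynomial (Fin 2) K) * e1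
    have hGF : G.comp F = AlgHom.id K _ := by
      apply MvPolynomial.algHom_ext
      intro i
      rw [AlgHom.comp_apply, AlgHom.id_apply]
      fin_cases i
      · simp only [F, G, Fin.isValue, aeval_X, Matrix.cons_val_zero, Matrix.cons_val_one,
          Matrix.head_cons, map_mul, aeval_C, algebraMap_eq, Fin.mk_zero, Fin.mk_one]
        linear_combination (X (0 : Fin 2) : MvPolynomial (Fin 2) K) * e1
      · simp [F, G]
    let e := AlgEquiv.ofAlgHom F G hFG hGF
    have hp : Prime (e (X 0)) := (MulEquiv.prime_iff (p := X 0) e.toMulEquiv).mpr prime_X0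
    have he : e (X 0) = C b * X 1 := by
      show F (X 0) = _
      simp [F]
    rw [he] at hp
    have : (C (0 : K) : MvPolynomial (Fin 2) K) * X 0 + C b * X 1 = C b * X 1 := by simp
    rwa [this]
  · let F : MvPolynomial (Fin 2) K →ₐ[K] MvPolynomial (Fin 2) K :=
      aeval ![C a * X 0 + C b * X 1, X 1]
    let G : MvPolynomial (Fin 2) K →ₐ[K] MvPolynomial (Fin 2) K :=
      aeval ![C a⁻¹ * X 0 - C (b / a) * X 1, X 1]
    have e1 : (C a : MvPolynomial (Fin 2) K) * C a⁻¹ = 1 := by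
      rw [← C_mul, mul_inv_cancel₀ ha, C_1]
    have e2 : (C a : MvPolynomial (Fin 2) K) * C (b / a) = C b := by
      rw [← C_mul, mul_div_cancel₀ _ ha]
    have e3 : (C (b / a) : MvPolynomial (Fin 2) K) = C a⁻¹ * C b := by
      rw [← C_mul, div_eq_inv_mul]
    have hFG : F.comp G = AlgHom.id K _ := by
      apply MvPolynomial.algHom_ext
      intro i
      rw [AlgHom.comp_apply, AlgHom.id_apply]
      fin_cases i
      · simp only [F, G, Fin.isValue, aeval_X, Matrix.cons_val_zero, Matrix.cons_val_one,
          Matrix.head_cons, map_sub, map_mul, map_add, aeval_C, algebraMap_eq, Fin.mk_zero, Fin.mk_one]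
        linear_combination (X (0 : Fin 2) : MvPolynomial (Fin 2) K) * e1 -
          (X (1 : Fin 2) : MvPolynomial (Fin 2) K) * e3
      · simp [F, G]
    have hGF : G.comp F = AlgHom.id K _ := by
      apply MvPolynomial.algHom_ext
      intro i
      rw [AlgHom.comp_apply, AlgHom.id_apply]
      fin_cases i
      · simp only [F, G, Fin.isValue, aeval_X, Matrix.cons_val_zero, Matrix.cons_val_one,
          Matrix.head_cons, map_sub, map_mul, map_add, aeval_C, algebraMap_eq, Fin.mk_zero, Fin.mk_one]
        linear_combination (X (0 : Fin 2) : MvPolynomial (Fin 2) K) * e1 -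
          (X (1 : Fin 2) : MvPolynomial (Fin 2) K) * e2
      · simp [F, G]
    let e := AlgEquiv.ofAlgHom F G hFG hGF
    have hp : Prime (e (X 0)) := (MulEquiv.prime_iff (p := X 0) e.toMulEquiv).mpr prime_X0
    have he : e (X 0) = C a * X 0 + C b * X 1 := by
      show F (X 0) = _
      simp [F]
    rwa [he] at hp

lemma pderiv_finset_prod {ι : Type*} [DecidableEq ι] (v : Fin 2) (s : Finset ι)
    (φ : ι → MvPolynomial (Fin 2) K) :
    pderiv v (∏ j ∈ s, φ j) = ∑ i ∈ s, (∏ j ∈ s.erase i, φ j) * pderiv v (φ i) := by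
  induction s using Finset.induction with
  | empty => simp
  | @insert c s hc ih =>
    have hterm : ∀ i ∈ s, (∏ j ∈ (insert c s).erase i, φ j) * pderiv v (φ i)
        = φ c * ((∏ j ∈ s.erase i, φ j) * pderiv v (φ i)) := by
      intro i hi
      have hic : i ≠ c := fun h => hc (h ▸ hi)
      rw [Finset.erase_insert_of_ne (Ne.symm hic),
        Finset.prod_insert (fun h => hc (Finset.erase_subset _ _ h))]
      ring
    rw [Finset.prod_insert hc, pderiv_mul, ih, Finset.sum_insert hc, Finset.erase_insert hc,
      Finset.sum_congr rfl hterm, Finset.mul_sum]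
    ring

lemma homog_rep {p : MvPolynomial (Fin 2) K} {N : ℕ} (hp : p.IsHomogeneous N) :
    p = ∑ k ∈ Finset.range (N + 1),
      monomial (Finsupp.single 0 k + Finsupp.single 1 (N - k))
        (coeff (Finsupp.single 0 k + Finsupp.single 1 (N - k)) p) := by
  classical
  have hdegk : ∀ k, k ≤ N → (Finsupp.single (0 : Fin 2) k + Finsupp.single 1 (N - k)).degree = N := by
    intro k hk
    rw [deg2]
    simp only [Finsupp.add_apply, Finsupp.single_apply]
    simp
    omega
  ext ν
  rw [coeff_sum]
  by_cases hν : ν.degree = N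
  · have hν0 : ν 0 ≤ N := by rw [deg2] at hν; omega
    have hνrep : Finsupp.single (0 : Fin 2) (ν 0) + Finsupp.single 1 (N - ν 0) = ν := by
      have hd := hν
      rw [deg2] at hd
      ext j
      fin_cases j <;> simp [Finsupp.single_apply] <;> omega
    rw [Finset.sum_eq_single (ν 0)]
    · rw [coeff_monomial, if_pos hνrep, hνrep]
    · intro k hk hkne
      rw [coeff_monomial, if_neg]
      intro h
      apply hkne
      have := DFunLike.congr_fun h 0
      simpa [Finsupp.single_apply] using this
    · intro h
      exact absurd (Finset.mem_range.mpr (by omega)) h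
  · rw [hp.coeff_eq_zero hν]
    symm
    apply Finset.sum_eq_zero
    intro k hk
    rw [coeff_monomial, if_neg]
    intro h
    exact hν (by rw [← h]; exact hdegk k (Nat.lt_succ_iff.mp (Finset.mem_range.mp hk)))

end Stmt18Aux
open MvPolynomial Finset Pointwise

set_option maxHeartbeats 1600000 in
theorem stmt18 {K : Type*} [Field K] [Infinite K] {m : ℕ}
    (hm : 3 ≤ m) (hchar : (m : K) ≠ 0)
    (l : Fin m → MvPolynomial (Fin 2) K)
    (hl : ∀ i, (l i).IsHomogeneous 1) (hlne : ∀ i, l i ≠ 0)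
    (hprop : ∀ i j, i ≠ j → ∀ c : K, l i ≠ C c * l j)
    (f : MvPolynomial (Fin 2) K) (hf : f = ∏ i, l i) :
    sInf {k : ℕ | ∃ S : Finset (MvPolynomial (Fin 2) K), S.card = k ∧
        Ideal.span (S : Set (MvPolynomial (Fin 2) K)) =
          Ideal.span (Set.range fun v => pderiv v f) *
            Ideal.span (Set.range fun i => ∏ j ∈ Finset.univ.erase i, l j)} =
      2 * m - 1 := by
  classical
  haveI : NeZero m := ⟨by omega⟩
  set N : ℕ := 2 * m - 2 with hN
  set g : Fin m → MvPolynomial (Fin 2) K := fun i => ∏ j ∈ Finset.univ.erase i, l j with hgdef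
  set I : Ideal (MvPolynomial (Fin 2) K) :=
    Ideal.span (Set.range fun v => pderiv v f) * Ideal.span (Set.range g) with hIdef
  set a : Fin m → K := fun i => coeff (Finsupp.single 0 1) (l i) with hadef
  set b : Fin m → K := fun i => coeff (Finsupp.single 1 1) (l i) with hbdef
  have hrep : ∀ i, l i = C (a i) * X 0 + C (b i) * X 1 := fun i => Stmt18Aux.homog1 (hl i)
  have habne : ∀ i, ¬(a i = 0 ∧ b i = 0) := by
    rintro i ⟨h1, h2⟩
    apply hlne i
    rw [hrep i, h1, h2]
    simp
  have hm1 : (m - 1) + (m - 1) = N := by omega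
  have hcard_erase : ∀ i : Fin m, (Finset.univ.erase i).card = m - 1 := fun i => by
    rw [Finset.card_erase_of_mem (Finset.mem_univ i), Finset.card_univ, Fintype.card_fin]
  have hghom : ∀ i, (g i).IsHomogeneous (m - 1) := by
    intro i
    have h := MvPolynomial.IsHomogeneous.prod (Finset.univ.erase i) l (fun _ => 1)
      (fun j _ => hl j)
    rwa [Finset.sum_const, hcard_erase i, smul_eq_mul, mul_one] at h
  have hfg : ∀ i, l i * g i = f := fun i => by
    rw [hf]; exact Finset.mul_prod_erase Finset.univ l (Finset.mem_univ i)
  have hpdl0 : ∀ i, pderiv (0 : Fin 2) (l i) = C (a i) := by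
    intro i; rw [hrep i]; simp
  have hpdl1 : ∀ i, pderiv (1 : Fin 2) (l i) = C (b i) := by
    intro i; rw [hrep i]; simp
  set fx := pderiv (0 : Fin 2) f with hfxdef
  set fy := pderiv (1 : Fin 2) f with hfydef
  have hfx : fx = ∑ i, C (a i) * g i := by
    rw [hfxdef, hf, Stmt18Aux.pderiv_finset_prod]
    exact Finset.sum_congr rfl fun i _ => by rw [hpdl0 i, mul_comm]
  have hfy : fy = ∑ i, C (b i) * g i := by
    rw [hfydef, hf, Stmt18Aux.pderiv_finset_prod]
    exact Finset.sum_congr rfl fun i _ => by rw [hpdl1 i, mul_comm]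
  have hfxhom : fx.IsHomogeneous (m - 1) := by
    rw [hfx]; exact MvPolynomial.IsHomogeneous.sum _ _ _ (fun i _ => (hghom i).C_mul _)
  have hfyhom : fy.IsHomogeneous (m - 1) := by
    rw [hfy]; exact MvPolynomial.IsHomogeneous.sum _ _ _ (fun i _ => (hghom i).C_mul _)
  have h01 : (0 : Fin m) ≠ (1 : Fin m) := by
    intro h
    have := congrArg Fin.val h
    rw [Fin.val_zero, Fin.val_one'] at this
    rw [Nat.mod_eq_of_lt (by omega)] at this
    omega
  have hdet : ∀ i j, i ≠ j → a i * b j - a j * b i ≠ 0 := by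
    intro i j hij hz
    by_cases hai : a i = 0
    · have hbi : b i ≠ 0 := fun h => habne i ⟨hai, h⟩
      have haj : a j = 0 := by
        rw [hai, zero_mul, zero_sub, neg_eq_zero, mul_eq_zero] at hz
        exact hz.resolve_right hbi
      have hbj : b j ≠ 0 := fun h => habne j ⟨haj, h⟩
      apply hprop i j hij (b i / b j)
      rw [hrep i, hrep j, hai, haj]
      have hcc : (C (b i / b j) : MvPolynomial (Fin 2) K) * C (b j) = C (b i) := by
        rw [← C_mul, div_mul_cancel₀ _ hbj]
      simp only [C_0, zero_mul, zero_add, mul_add, ← mul_assoc, hcc]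
    · apply hprop j i hij.symm (a j / a i)
      have h1 : (C (a j / a i) : MvPolynomial (Fin 2) K) * C (a i) = C (a j) := by
        rw [← C_mul, div_mul_cancel₀ _ hai]
      have hz' : a i * b j = a j * b i := by linear_combination hz
      have h2 : (C (a j / a i) : MvPolynomial (Fin 2) K) * C (b i) = C (b j) := by
        rw [← C_mul]
        congr 1
        rw [div_mul_eq_mul_div, div_eq_iff hai, ← hz']
        ring
      rw [hrep i, hrep j, mul_add, ← mul_assoc, ← mul_assoc, h1, h2]
  have heval : ∀ i j, eval ![b i, -(a i)] (l j) = a j * b i - a i * b j := by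
    intro i j
    rw [hrep j]
    simp only [map_add, map_mul, eval_C, eval_X, Matrix.cons_val_zero, Matrix.cons_val_one,
      Matrix.head_cons]
    ring
  have hgind : LinearIndependent K g := by
    rw [Fintype.linearIndependent_iff]
    intro c hc i
    have hev := congrArg (eval ![b i, -(a i)]) hc
    rw [map_sum, map_zero] at hev
    have hz : ∀ j ∈ Finset.univ, j ≠ i → eval ![b i, -(a i)] (c j • g j) = 0 := by
      intro j _ hj
      rw [smul_eq_C_mul, map_mul, eval_C]
      have hgz : eval ![b i, -(a i)] (g j) = 0 := by
        simp only [hgdef]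
        rw [map_prod]
        apply Finset.prod_eq_zero (Finset.mem_erase.mpr ⟨Ne.symm hj, Finset.mem_univ i⟩)
        rw [heval i i]; ring
      rw [hgz, mul_zero]
    rw [Finset.sum_eq_single_of_mem i (Finset.mem_univ i) hz] at hev
    rw [smul_eq_C_mul, map_mul, eval_C] at hev
    have hgne : eval ![b i, -(a i)] (g i) ≠ 0 := by
      simp only [hgdef]
      rw [map_prod]
      apply Finset.prod_ne_zero_iff.mpr
      intro j hj
      rw [heval i j]
      exact hdet j i (Finset.mem_erase.mp hj).1
    exact (mul_eq_zero.mp hev).resolve_right hgne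
  have hlprime : ∀ i, Prime (l i) := fun i => by
    rw [hrep i]; exact Stmt18Aux.prime_linear (habne i)
  have hldvdg : ∀ i j, i ≠ j → l i ∣ g j := by
    intro i j hij
    simp only [hgdef]
    exact Finset.dvd_prod_of_mem l (Finset.mem_erase.mpr ⟨hij, Finset.mem_univ i⟩)
  have hlnotdvdg : ∀ i, ¬ l i ∣ g i := by
    intro i hdvd
    have hdvd' : l i ∣ ∏ j ∈ Finset.univ.erase i, l j := by
      simpa only [hgdef] using hdvd
    obtain ⟨j, hj, hdj⟩ := (hlprime i).exists_mem_finset_dvd hdvd'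
    obtain ⟨q, hq⟩ := hdj
    exact hprop j i (Finset.mem_erase.mp hj).1 _
      (Stmt18Aux.homog_factor (h := q) (hl i) (hl j) (by rw [hq, mul_comm]))
  have hlC : ∀ (i : Fin m) (c : K), l i ∣ C c → c = 0 := by
    intro i c hdvd
    obtain ⟨q, hq⟩ := hdvd
    have hcc := congrArg constantCoeff hq
    rw [constantCoeff_C, map_mul] at hcc
    have h0 : constantCoeff (l i) = 0 := by
      rw [constantCoeff_eq]
      exact (hl i).coeff_eq_zero (by simp)
    rw [h0, zero_mul] at hcc
    exact hcc
  have hkey : ∀ (c : Fin m → K) (i : Fin m), (l i ∣ ∑ j, C (c j) * g j) → c i = 0 := by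
    intro c i hdvd
    have hsplit : ∑ j, C (c j) * g j
        = C (c i) * g i + ∑ j ∈ Finset.univ.erase i, C (c j) * g j :=
      (Finset.add_sum_erase _ _ (Finset.mem_univ i)).symm
    have h2 : l i ∣ ∑ j ∈ Finset.univ.erase i, C (c j) * g j :=
      Finset.dvd_sum fun j hj =>
        Dvd.dvd.mul_left (hldvdg i j (Ne.symm (Finset.mem_erase.mp hj).1)) _
    have h3 := dvd_sub hdvd h2
    rw [hsplit, add_sub_cancel_right] at h3
    rcases (hlprime i).2.2 _ _ h3 with h | h
    · exact hlC i _ h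
    · exact absurd h (hlnotdvdg i)
  have hfx0 : fx ≠ 0 := by
    intro h0
    have hsum : ∑ i, a i • g i = 0 := by
      have h1 := hfx.symm.trans h0
      simpa [smul_eq_C_mul] using h1
    have hall := Fintype.linearIndependent_iff.mp hgind a hsum
    exact hdet 0 1 h01 (by rw [hall 0, hall 1]; ring)
  have hfy0 : fy ≠ 0 := by
    intro h0
    have hsum : ∑ i, b i • g i = 0 := by
      have h1 := hfy.symm.trans h0
      simpa [smul_eq_C_mul] using h1
    have hall := Fintype.linearIndependent_iff.mp hgind b hsum
    exact hdet 0 1 h01 (by rw [hall 0, hall 1]; ring)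
  have hEuler : X 0 * fx + X 1 * fy = C (m : K) * f := by
    rw [hfx, hfy, Finset.mul_sum, Finset.mul_sum, ← Finset.sum_add_distrib]
    have hterm : ∀ i ∈ Finset.univ, X 0 * (C (a i) * g i) + X 1 * (C (b i) * g i) = f := by
      intro i _
      rw [← hfg i, hrep i]; ring
    rw [Finset.sum_congr rfl hterm, Finset.sum_const, Finset.card_univ, Fintype.card_fin,
      ← smul_eq_C_mul, ← Nat.cast_smul_eq_nsmul K]
  have hcop : IsRelPrime fx fy := by
    rw [UniqueFactorizationMonoid.isRelPrime_iff_no_prime_factors hfx0]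
    intro d hdx hdy hdp
    have hdf : d ∣ C (m : K) * f := by
      rw [← hEuler]; exact dvd_add (hdx.mul_left _) (hdy.mul_left _)
    have hCm : IsUnit (C (m : K) : MvPolynomial (Fin 2) K) :=
      (isUnit_iff_ne_zero.mpr hchar).map C
    have hdf2 : d ∣ f := by
      rcases hdp.2.2 _ _ hdf with h | h
      · exact absurd (isUnit_of_dvd_unit h hCm) hdp.not_unit
      · exact h
    obtain ⟨i, _, hdi⟩ := hdp.exists_mem_finset_dvd (by rwa [hf] at hdf2)
    obtain ⟨q, hq⟩ := hdi
    rcases (hlprime i).irreducible.isUnit_or_isUnit hq with h | h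
    · exact hdp.not_unit h
    · have hlid : l i ∣ d := by
        refine ⟨↑h.unit⁻¹, ?_⟩
        rw [hq, mul_assoc, IsUnit.mul_val_inv, mul_one]
      exact habne i ⟨hkey a i (by rw [← hfx]; exact hlid.trans hdx),
        hkey b i (by rw [← hfy]; exact hlid.trans hdy)⟩
  have hker : ∀ u v : MvPolynomial (Fin 2) K, u.IsHomogeneous (m - 1) →
      v.IsHomogeneous (m - 1) → u * fx + v * fy = 0 →
      ∃ lam : K, u = C lam * fy ∧ v = -(C lam * fx) := by
    intro u v hu hv heq
    have hdvd : fy ∣ u * fx := ⟨-v, by linear_combination heq⟩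
    obtain ⟨h, hh⟩ := hcop.symm.dvd_of_dvd_mul_right hdvd
    have h2 : u = C (constantCoeff h) * fy :=
      Stmt18Aux.homog_factor hfyhom hu (by rw [hh]; ring)
    refine ⟨constantCoeff h, h2, ?_⟩
    have h3 : fy * (C (constantCoeff h) * fx + v) = 0 := by
      rw [h2] at heq; linear_combination heq
    have h4 := (mul_eq_zero.mp h3).resolve_left hfy0
    linear_combination h4
  -- the linear map
  let Φ : ((Fin m → K) × (Fin m → K)) →ₗ[K] MvPolynomial (Fin 2) K :=
    LinearMap.coprod (Fintype.linearCombination K fun i => fx * g i)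
      (Fintype.linearCombination K fun i => fy * g i)
  have hΦ : ∀ cd : (Fin m → K) × (Fin m → K),
      Φ cd = (∑ i, cd.1 i • (fx * g i)) + (∑ i, cd.2 i • (fy * g i)) := by
    intro cd
    simp [Φ, LinearMap.coprod_apply, Fintype.linearCombination_apply]
  have hmulsum : ∀ (c : Fin m → K) (p : MvPolynomial (Fin 2) K),
      (∑ i, c i • (p * g i)) = p * ∑ i, C (c i) * g i := by
    intro c p
    rw [Finset.mul_sum]
    exact Finset.sum_congr rfl fun i _ => by rw [smul_eq_C_mul]; ring
  have hwne : ((b, fun i => -(a i)) : (Fin m → K) × (Fin m → K)) ≠ 0 := by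
    intro h
    have hb0 := congrFun (congrArg Prod.fst h) 0
    have ha0 := congrFun (congrArg Prod.snd h) 0
    simp only [Prod.fst_zero, Prod.snd_zero, Pi.zero_apply, neg_eq_zero] at hb0 ha0
    exact habne 0 ⟨ha0, hb0⟩
  have hkerΦ : LinearMap.ker Φ
      = Submodule.span K {((b, fun i => -(a i)) : (Fin m → K) × (Fin m → K))} := by
    apply le_antisymm
    · rintro ⟨c, d⟩ hcd
      rw [LinearMap.mem_ker, hΦ ⟨c, d⟩] at hcd
      rw [hmulsum, hmulsum] at hcd
      obtain ⟨lam, hu1, hu2⟩ := hker (∑ i, C (c i) * g i) (∑ i, C (d i) * g i)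
        (MvPolynomial.IsHomogeneous.sum _ _ _ fun i _ => (hghom i).C_mul _)
        (MvPolynomial.IsHomogeneous.sum _ _ _ fun i _ => (hghom i).C_mul _)
        (by linear_combination hcd)
      have hc : ∀ i, c i = lam * b i := by
        have hexp : ∀ i ∈ Finset.univ, (c i - lam * b i) • g i
            = C (c i) * g i - C lam * (C (b i) * g i) := by
          intro i _
          rw [sub_smul, smul_eq_C_mul, smul_eq_C_mul, C_mul]
          ring
        have hs : ∑ i, (c i - lam * b i) • g i = 0 := by
          have hsum2 : ∑ i, (c i - lam * b i) • g i
              = (∑ i, C (c i) * g i) - C lam * (∑ i, C (b i) * g i) := by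
            rw [Finset.sum_congr rfl hexp, Finset.sum_sub_distrib, Finset.mul_sum]
          rw [hsum2, ← hfy, hu1, sub_self]
        intro i
        exact sub_eq_zero.mp (Fintype.linearIndependent_iff.mp hgind _ hs i)
      have hd : ∀ i, d i = lam * -(a i) := by
        have hexp : ∀ i ∈ Finset.univ, (d i + lam * a i) • g i
            = C (d i) * g i + C lam * (C (a i) * g i) := by
          intro i _
          rw [add_smul, smul_eq_C_mul, smul_eq_C_mul, C_mul]
          ring
        have hs : ∑ i, (d i + lam * a i) • g i = 0 := by
          have hsum3 : ∑ i, (d i + lam * a i) • g i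
              = (∑ i, C (d i) * g i) + C lam * (∑ i, C (a i) * g i) := by
            rw [Finset.sum_congr rfl hexp, Finset.sum_add_distrib, Finset.mul_sum]
          rw [hsum3, ← hfx, hu2]
          ring
        intro i
        have h' := Fintype.linearIndependent_iff.mp hgind _ hs i
        have h'' : d i = -(lam * a i) := by linear_combination h'
        rw [h'']; ring
      rw [Submodule.mem_span_singleton]
      refine ⟨lam, Prod.ext (funext fun i => ?_) (funext fun i => ?_)⟩
      · simpa using (hc i).symm
      · simpa using (hd i).symm
    · rw [Submodule.span_singleton_le_iff_mem, LinearMap.mem_ker, hΦ]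
      rw [hmulsum, hmulsum]
      have hnegsum : ∑ i, C (-(a i)) * g i = -fx := by
        rw [hfx, ← Finset.sum_neg_distrib]
        exact Finset.sum_congr rfl fun i _ => by rw [map_neg]; ring
      rw [hnegsum, ← hfy]
      ring
  have hkerrank : Module.finrank K (LinearMap.ker Φ) = 1 := by
    rw [hkerΦ]; exact finrank_span_singleton hwne
  have hdomrank : Module.finrank K ((Fin m → K) × (Fin m → K)) = 2 * m := by
    rw [Module.finrank_prod, Module.finrank_pi, Fintype.card_fin]
    omega
  have hranknul := LinearMap.finrank_range_add_finrank_ker Φ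
  rw [hdomrank, hkerrank] at hranknul
  have hrangerank : Module.finrank K (LinearMap.range Φ) = 2 * m - 1 := by omega
  -- monomials of degree N
  let mon : Fin (2 * m - 1) → MvPolynomial (Fin 2) K := fun k =>
    monomial (Finsupp.single 0 (k : ℕ) + Finsupp.single 1 (N - (k : ℕ))) 1
  have hkN : ∀ k : Fin (2 * m - 1), (k : ℕ) ≤ N := fun k => by
    have := k.isLt; omega
  have hmonhom : ∀ k, (mon k).IsHomogeneous N := by
    intro k
    apply isHomogeneous_monomial
    rw [Stmt18Aux.deg2]
    simp only [Finsupp.add_apply, Finsupp.single_apply]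
    have := hkN k
    simp
    omega
  have hidxinj : Function.Injective
      (fun k : Fin (2 * m - 1) => Finsupp.single (0 : Fin 2) (k : ℕ)
        + Finsupp.single 1 (N - (k : ℕ))) := by
    intro k k' h
    have h2 := DFunLike.congr_fun h 0
    simp [Finsupp.single_apply] at h2
    exact Fin.ext h2
  have hmoninj : Function.Injective mon :=
    fun k k' h => hidxinj (monomial_left_injective (R := K) one_ne_zero h)
  have hmonind : LinearIndependent K mon := by
    have hb := (MvPolynomial.basisMonomials (Fin 2) K).linearIndependent
    have hcomp := hb.comp _ hidxinj
    have hmon : mon = ⇑(MvPolynomial.basisMonomials (Fin 2) K)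
        ∘ (fun k : Fin (2 * m - 1) => Finsupp.single (0 : Fin 2) (k : ℕ)
          + Finsupp.single 1 (N - (k : ℕ))) := by
      funext k
      simp [mon, coe_basisMonomials]
    rw [hmon]
    exact hcomp
  have hhomogmem : ∀ p : MvPolynomial (Fin 2) K, p.IsHomogeneous N →
      p ∈ Submodule.span K (Set.range mon) := by
    intro p hp
    rw [Stmt18Aux.homog_rep hp]
    apply Submodule.sum_mem
    intro k hk
    have hk' : k < 2 * m - 1 := by have := Finset.mem_range.mp hk; omega
    have heq : (monomial (Finsupp.single 0 k + Finsupp.single 1 (N - k))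
        (coeff (Finsupp.single 0 k + Finsupp.single 1 (N - k)) p))
        = (coeff (Finsupp.single 0 k + Finsupp.single 1 (N - k)) p) • mon ⟨k, hk'⟩ := by
      simp [mon, smul_monomial]
    rw [heq]
    exact Submodule.smul_mem _ _ (Submodule.subset_span ⟨⟨k, hk'⟩, rfl⟩)
  have hprodhomX : ∀ i, (fx * g i).IsHomogeneous N := fun i => hm1 ▸ hfxhom.mul (hghom i)
  have hprodhomY : ∀ i, (fy * g i).IsHomogeneous N := fun i => hm1 ▸ hfyhom.mul (hghom i)
  have hrangele : LinearMap.range Φ ≤ Submodule.span K (Set.range mon) := by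
    rintro x ⟨cd, rfl⟩
    rw [hΦ]
    apply Submodule.add_mem
    · exact Submodule.sum_mem _ fun i _ =>
        Submodule.smul_mem _ _ (hhomogmem _ (hprodhomX i))
    · exact Submodule.sum_mem _ fun i _ =>
        Submodule.smul_mem _ _ (hhomogmem _ (hprodhomY i))
  haveI hfinM : FiniteDimensional K (Submodule.span K (Set.range mon)) :=
    FiniteDimensional.span_of_finite K (Set.finite_range mon)
  have hMle : Module.finrank K (Submodule.span K (Set.range mon)) ≤ 2 * m - 1 := by
    refine le_trans (finrank_span_le_card (R := K) (Set.range mon)) ?_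
    rw [Set.toFinset_range]
    exact le_trans Finset.card_image_le (by simp)
  have hrangeeq : LinearMap.range Φ = Submodule.span K (Set.range mon) :=
    Submodule.eq_of_le_of_finrank_le hrangele (by rw [hrangerank]; exact hMle)
  have hmemI : ∀ p : MvPolynomial (Fin 2) K, p.IsHomogeneous N → p ∈ I := by
    intro p hp
    have hpr : p ∈ LinearMap.range Φ := by rw [hrangeeq]; exact hhomogmem p hp
    obtain ⟨cd, hcd⟩ := hpr
    rw [← hcd, hΦ]
    have hfxI : fx ∈ Ideal.span (Set.range fun v => pderiv v f) :=
      Ideal.subset_span ⟨0, by rw [hfxdef]⟩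
    have hfyI : fy ∈ Ideal.span (Set.range fun v => pderiv v f) :=
      Ideal.subset_span ⟨1, by rw [hfydef]⟩
    have hgI : ∀ i, g i ∈ Ideal.span (Set.range g) := fun i => Ideal.subset_span ⟨i, rfl⟩
    apply Ideal.add_mem
    · apply Ideal.sum_mem
      intro i _
      rw [smul_eq_C_mul]
      exact Ideal.mul_mem_left _ _ (Ideal.mul_mem_mul hfxI (hgI i))
    · apply Ideal.sum_mem
      intro i _
      rw [smul_eq_C_mul]
      exact Ideal.mul_mem_left _ _ (Ideal.mul_mem_mul hfyI (hgI i))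
  have hpdhom : ∀ v : Fin 2, (pderiv v f).IsHomogeneous (m - 1) := by
    intro v
    fin_cases v
    · exact hfxhom
    · exact hfyhom
  have hIgen : I = Ideal.span ((Set.range fun v => pderiv v f) * Set.range g) := by
    rw [hIdef, Ideal.span_mul_span']
  have hgenhom : ∀ t ∈ (Set.range fun v => pderiv v f) * Set.range g,
      t.IsHomogeneous N := by
    rintro t ⟨x, hx, y, hy, rfl⟩
    obtain ⟨v, rfl⟩ := hx
    obtain ⟨i, rfl⟩ := hy
    exact hm1 ▸ (hpdhom v).mul (hghom i)
  have hlowI : ∀ p ∈ I, ∀ ν : Fin 2 →₀ ℕ, ν.degree < N → coeff ν p = 0 := by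
    intro p hp
    rw [hIgen] at hp
    induction hp using Submodule.span_induction with
    | mem t ht => exact fun ν hν => (hgenhom t ht).coeff_eq_zero (by omega)
    | zero => intro ν hν; simp
    | add x y hx hy ihx ihy => intro ν hν; rw [coeff_add, ihx ν hν, ihy ν hν, add_zero]
    | smul r x hx ihx =>
      intro ν hν
      rw [smul_eq_mul]
      exact Stmt18Aux.coeff_mul_lt_of_low ihx r hν
  have hhomoginspan : ∀ p : MvPolynomial (Fin 2) K, p.IsHomogeneous N →
      p ∈ Ideal.span (Set.range mon) := by
    intro p hp
    rw [Stmt18Aux.homog_rep hp]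
    apply Ideal.sum_mem
    intro k hk
    have hk' : k < 2 * m - 1 := by have := Finset.mem_range.mp hk; omega
    have heq : (monomial (Finsupp.single 0 k + Finsupp.single 1 (N - k))
        (coeff (Finsupp.single 0 k + Finsupp.single 1 (N - k)) p))
        = C (coeff (Finsupp.single 0 k + Finsupp.single 1 (N - k)) p) * mon ⟨k, hk'⟩ := by
      simp [mon, C_mul_monomial]
    rw [heq]
    exact Ideal.mul_mem_left _ _ (Ideal.subset_span ⟨⟨k, hk'⟩, rfl⟩)
  have hSmem : (2 * m - 1) ∈ {k : ℕ | ∃ S : Finset (MvPolynomial (Fin 2) K), S.card = k ∧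
      Ideal.span (S : Set (MvPolynomial (Fin 2) K)) = I} := by
    refine ⟨Finset.image mon Finset.univ, ?_, ?_⟩
    · rw [Finset.card_image_of_injective _ hmoninj, Finset.card_univ, Fintype.card_fin]
    · apply le_antisymm
      · rw [Ideal.span_le]
        intro x hx
        simp only [Finset.coe_image, Finset.coe_univ, Set.image_univ] at hx
        obtain ⟨k, rfl⟩ := hx
        exact hmemI _ (hmonhom k)
      · rw [hIgen, Ideal.span_le]
        intro t ht
        have h2 := hhomoginspan t (hgenhom t ht)
        rwa [show (Set.range mon)
          = ((Finset.image mon Finset.univ : Finset (MvPolynomial (Fin 2) K))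
            : Set (MvPolynomial (Fin 2) K)) by
          rw [Finset.coe_image, Finset.coe_univ, Set.image_univ]] at h2
  have hlower : ∀ k ∈ {k : ℕ | ∃ S : Finset (MvPolynomial (Fin 2) K), S.card = k ∧
      Ideal.span (S : Set (MvPolynomial (Fin 2) K)) = I}, 2 * m - 1 ≤ k := by
    rintro k ⟨S, hcard, hspan⟩
    set π : MvPolynomial (Fin 2) K → MvPolynomial (Fin 2) K :=
      fun p => homogeneousComponent N p with hπdef
    have hrange_sub : Set.range mon
        ⊆ ↑(Submodule.span K ((S.image π : Finset (MvPolynomial (Fin 2) K))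
          : Set (MvPolynomial (Fin 2) K))) := by
      rintro x ⟨kk, rfl⟩
      have hmonI : mon kk ∈ Submodule.span (MvPolynomial (Fin 2) K)
          ((S : Set (MvPolynomial (Fin 2) K))) := by
        have : mon kk ∈ Ideal.span (S : Set (MvPolynomial (Fin 2) K)) := by
          rw [hspan]; exact hmemI _ (hmonhom kk)
        exact this
      obtain ⟨r, -, hr⟩ := Submodule.mem_span_finset.mp hmonI
      simp only [smul_eq_mul] at hr
      have hmonfix : mon kk = homogeneousComponent N (mon kk) := by
        ext ν
        rw [coeff_homogeneousComponent]
        by_cases h : ν.degree = N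
        · rw [if_pos h]
        · rw [if_neg h, (hmonhom kk).coeff_eq_zero h]
      have hterm : ∀ s ∈ S, homogeneousComponent N (r s * s)
          = constantCoeff (r s) • homogeneousComponent N s := by
        intro s hs
        have hsI : ∀ ν : Fin 2 →₀ ℕ, ν.degree < N → coeff ν s = 0 :=
          hlowI s (hspan ▸ Ideal.subset_span hs)
        ext ν
        rw [coeff_homogeneousComponent, coeff_smul, coeff_homogeneousComponent]
        by_cases h : ν.degree = N
        · rw [if_pos h, if_pos h, smul_eq_mul]
          exact Stmt18Aux.coeff_mul_eq_of_low hsI (r s) h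
        · rw [if_neg h, if_neg h, smul_zero]
      have hrepr : mon kk = ∑ s ∈ S, constantCoeff (r s) • homogeneousComponent N s := by
        calc mon kk = homogeneousComponent N (mon kk) := hmonfix
          _ = homogeneousComponent N (∑ s ∈ S, r s * s) := by rw [hr]
          _ = ∑ s ∈ S, homogeneousComponent N (r s * s) := map_sum _ _ _
          _ = ∑ s ∈ S, constantCoeff (r s) • homogeneousComponent N s :=
            Finset.sum_congr rfl hterm
      rw [hrepr]
      apply Submodule.sum_mem
      intro s hs
      exact Submodule.smul_mem _ _
        (Submodule.subset_span (Finset.mem_coe.mpr (Finset.mem_image_of_mem π hs)))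
    have hcardle := linearIndependent_le_span' mon hmonind _ hrange_sub
    rw [Cardinal.mk_fintype, Fintype.card_fin, Nat.cast_le] at hcardle
    have hcardle' : 2 * m - 1 ≤ (S.image π).card := by
      simpa only [Finset.coe_sort_coe, Fintype.card_coe] using hcardle
    calc 2 * m - 1 ≤ (S.image π).card := hcardle'
      _ ≤ S.card := Finset.card_image_le
      _ = k := hcard
  apply le_antisymm
  · exact Nat.sInf_le hSmem
  · exact le_csInf ⟨_, hSmem⟩ hlower
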